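/- arXiv:2005.12995 — 3 statements merged into one kernel-verified Lean document; each statement's English description precedes it below -/
import Mathlib

section
/- For every integer n ≥ 1 and every integer i with 1 ≤ i ≤ ⌊(n+1)/2⌋, the identity Σ_{w=1}^n K_w^{(n)}(i)·2^{n−w}·w·C(w−1, ⌈w/2⌉−1) = (−1)^i·Σ_{w=0}^{n−1} K_w^{(n−1)}(2i−2)·C(n−1,w) holds. -/
/-- The Krawtchouk polynomial `K_k^{(n)}(x) = Σ_{i=0}^k (−1)^i·C(x,i)·C(n−x,k−i)`. -/
def kraw (n k x : ℕ) : ℤ :=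
  ∑ i ∈ Finset.range (k + 1),
    (-1 : ℤ) ^ i * (Nat.choose x i : ℤ) * (Nat.choose (n - x) (k - i) : ℤ)

open Polynomial Finset


lemma coeff_one_sub_X_pow (x k : ℕ) :
    (((1 : ℤ[X]) - X) ^ x).coeff k = (-1) ^ k * (x.choose k : ℤ) := by
  have h : ((1 : ℤ[X]) - X) ^ x = (-X + 1) ^ x := by ring
  rw [h, add_pow]
  have hterm : ∀ j : ℕ, (-X : ℤ[X]) ^ j * (1:ℤ[X]) ^ (x - j) * (x.choose j : ℤ[X]) =
      C ((-1) ^ j * (x.choose j : ℤ)) * X ^ j := by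
    intro j
    rw [map_mul, map_pow, map_neg, map_one, Polynomial.C_eq_natCast]
    ring
  rw [Finset.sum_congr rfl (fun j _ => hterm j), finset_sum_coeff]
  simp only [coeff_C_mul, coeff_X_pow]
  rw [Finset.sum_eq_single k]
  · simp
  · intro b _ hbk
    simp [Ne.symm hbk]
  · intro hk
    have : x < k := by simp at hk; omega
    simp [Nat.choose_eq_zero_of_lt this]

lemma kraw_coeff (n k x : ℕ) :
    kraw n k x = ((((1:ℤ[X]) - X) ^ x * ((1:ℤ[X]) + X) ^ (n - x))).coeff k := by
  rw [coeff_mul, Finset.Nat.sum_antidiagonal_eq_sum_range_succ_mk]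
  unfold kraw
  refine Finset.sum_congr rfl fun j _ => ?_
  rw [coeff_one_sub_X_pow, coeff_one_add_X_pow]

lemma kraw_big {m k x : ℕ} (hx : x ≤ m) (hk : m < k) : kraw m k x = 0 := by
  rw [kraw_coeff]
  apply coeff_eq_zero_of_natDegree_lt
  have h1 : ((1:ℤ[X]) - X).natDegree ≤ 1 := by
    refine le_trans (natDegree_sub_le _ _) ?_
    simp
  have h2 : ((1:ℤ[X]) + X).natDegree ≤ 1 := by
    refine le_trans (natDegree_add_le _ _) ?_
    simp
  have h3 := natDegree_pow_le (p := (1:ℤ[X]) - X) (n := x)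
  have h4 := natDegree_pow_le (p := (1:ℤ[X]) + X) (n := m - x)
  have h5 := natDegree_mul_le (p := ((1:ℤ[X]) - X) ^ x) (q := ((1:ℤ[X]) + X) ^ (m - x))
  have hb : x * ((1:ℤ[X]) - X).natDegree ≤ x * 1 := Nat.mul_le_mul_left x h1
  have hb2 : (m - x) * ((1:ℤ[X]) + X).natDegree ≤ (m - x) * 1 := Nat.mul_le_mul_left _ h2
  omega

lemma kraw_add {m x : ℕ} (hx : x ≤ m) (k : ℕ) :
    kraw (m+1) k x + kraw (m+1) k (x+1) = 2 * kraw m k x := by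
  rw [kraw_coeff, kraw_coeff, kraw_coeff]
  have h1 : m + 1 - x = (m - x) + 1 := by omega
  have h2 : m + 1 - (x+1) = m - x := by omega
  rw [h1, h2, ← coeff_add]
  have h3 : ((1:ℤ[X]) - X) ^ x * ((1:ℤ[X]) + X) ^ (m - x + 1) +
      ((1:ℤ[X]) - X) ^ (x+1) * ((1:ℤ[X]) + X) ^ (m - x) =
      C 2 * (((1:ℤ[X]) - X) ^ x * ((1:ℤ[X]) + X) ^ (m - x)) := by
    rw [pow_succ, pow_succ]
    have : (C 2 : ℤ[X]) = 2 := by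
      simp
    rw [this]; ring
  rw [h3, coeff_C_mul]

lemma kraw_x1 (m v : ℕ) : kraw (m+1) (v+1) 1 = (m.choose (v+1) : ℤ) - (m.choose v : ℤ) := by
  rw [kraw_coeff]
  have h1 : m + 1 - 1 = m := by omega
  rw [h1, pow_one, sub_mul, one_mul, coeff_sub, coeff_one_add_X_pow, coeff_X_mul,
    coeff_one_add_X_pow]

noncomputable def Zc (a b N : ℕ) : ℤ := (((1:ℤ[X]) - X) ^ a * ((1:ℤ[X]) + X) ^ b).coeff N

lemma Zc_zero (b N : ℕ) : Zc 0 b N = (b.choose N : ℤ) := by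
  unfold Zc
  rw [pow_zero, one_mul, coeff_one_add_X_pow]

lemma Zc_rec (a b N : ℕ) : Zc a (b+2) (N+1) = Zc (a+2) b (N+1) + 4 * Zc a b N := by
  unfold Zc
  have h : ((1:ℤ[X]) - X) ^ a * ((1:ℤ[X]) + X) ^ (b+2) =
      ((1:ℤ[X]) - X) ^ (a+2) * ((1:ℤ[X]) + X) ^ b +
      C 4 * (X * (((1:ℤ[X]) - X) ^ a * ((1:ℤ[X]) + X) ^ b)) := by
    have h4 : (C 4 : ℤ[X]) = 4 := by simp
    rw [pow_add, pow_add, h4]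
    ring
  rw [h, coeff_add, coeff_C_mul, coeff_X_mul]
lemma coeff_X_add_two_pow (s k : ℕ) :
    ((X + 2 : ℤ[X]) ^ s).coeff k = (s.choose k : ℤ) * 2 ^ (s - k) := by
  rw [add_pow]
  have hterm : ∀ j : ℕ, (X:ℤ[X]) ^ j * (2:ℤ[X]) ^ (s - j) * (s.choose j : ℤ[X]) =
      C ((2:ℤ) ^ (s-j) * (s.choose j : ℤ)) * X ^ j := by
    intro j
    rw [map_mul, map_pow, Polynomial.C_eq_natCast]
    have h2 : (C (2:ℤ) : ℤ[X]) = 2 := by simp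
    rw [h2]
    ring
  rw [Finset.sum_congr rfl (fun j _ => hterm j), finset_sum_coeff]
  simp only [coeff_C_mul, coeff_X_pow]
  rw [Finset.sum_eq_single k]
  · simp [mul_comm]
  · intro b _ hbk
    simp [Ne.symm hbk]
  · intro hk
    simp only [Finset.mem_range, not_lt] at hk
    simp [Nat.choose_eq_zero_of_lt (by omega : s < k)]

lemma trino (m t : ℕ) : m.choose (2*t) * (2*t).choose t = m.choose t * (m-t).choose t := by
  by_cases h : 2*t ≤ m
  · have := Nat.choose_mul (n := m) (k := 2*t) (s := t) (by omega)
    rwa [show 2*t - t = t by omega] at this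
  · have h1 : m.choose (2*t) = 0 := Nat.choose_eq_zero_of_lt (by omega)
    by_cases h2 : t ≤ m
    · have h3 : (m - t).choose t = 0 := Nat.choose_eq_zero_of_lt (by omega)
      simp [h1, h3]
    · have h3 : m.choose t = 0 := Nat.choose_eq_zero_of_lt (by omega)
      simp [h1, h3]

lemma central_sum (m : ℕ) :
    ∑ t ∈ Finset.range (m+1),
        ((m.choose (2*t) : ℤ) * ((2*t).choose t : ℤ) * 2 ^ (m - 2*t))
      = ((2*m).choose m : ℤ) := by
  set F : ℕ → ℤ := fun s => (m.choose s : ℤ) * ((s.choose (m-s) : ℤ) * 2 ^ (s - (m - s)))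
    with hF
  have key : ((1:ℤ[X]) + X) ^ (2*m)
      = ∑ s ∈ Finset.range (m+1), C ((m.choose s : ℤ)) * ((X:ℤ[X]) ^ s * (X + 2:ℤ[X]) ^ s) := by
    rw [pow_mul]
    have h2 : ((1:ℤ[X]) + X) ^ 2 = X * (X + 2) + 1 := by ring
    rw [h2, add_pow]
    refine Finset.sum_congr rfl fun s _ => ?_
    rw [one_pow, mul_one, mul_pow, Polynomial.C_eq_natCast]
    ring
  have hA : ((2*m).choose m : ℤ) = ∑ s ∈ Finset.range (m+1), F s := by
    have h1 : (((1:ℤ[X]) + X) ^ (2*m)).coeff m = ((2*m).choose m : ℤ) :=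
      coeff_one_add_X_pow ℤ (2*m) m
    rw [key, finset_sum_coeff] at h1
    rw [← h1]
    refine Finset.sum_congr rfl fun s hs => ?_
    simp only [Finset.mem_range] at hs
    rw [coeff_C_mul]
    have hx := Polynomial.coeff_X_pow_mul ((X + 2:ℤ[X]) ^ s) s (m - s)
    rw [show (m - s) + s = m by omega] at hx
    rw [hx, coeff_X_add_two_pow, hF]
  have h3 : ∀ t ∈ Finset.range (m+1),
      (m.choose (2*t) : ℤ) * ((2*t).choose t : ℤ) * 2 ^ (m - 2*t) = F (m - t) := by
    intro t ht
    simp only [Finset.mem_range] at ht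
    have htm : t ≤ m := by omega
    rw [hF]
    simp only []
    rw [show m - (m - t) = t by omega, show m - t - t = m - 2*t by omega,
      Nat.choose_symm htm]
    have hc : (m.choose (2*t) : ℤ) * ((2*t).choose t : ℤ)
        = (m.choose t : ℤ) * ((m-t).choose t : ℤ) := by exact_mod_cast trino m t
    linear_combination (2:ℤ) ^ (m - 2*t) * hc
  calc ∑ t ∈ Finset.range (m+1),
        ((m.choose (2*t) : ℤ) * ((2*t).choose t : ℤ) * 2 ^ (m - 2*t))
      = ∑ t ∈ Finset.range (m+1), F (m - t) := Finset.sum_congr rfl h3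
    _ = ∑ t ∈ Finset.range (m+1), F t := by
        have := Finset.sum_range_reflect F (m+1)
        simpa using this
    _ = ((2*m).choose m : ℤ) := hA.symm

lemma c_step (v : ℕ) :
    ((v+1 : ℕ) : ℤ) * (Nat.choose v ((v+2)/2 - 1) : ℤ)
      = 2 * ((v:ℤ) * (Nat.choose (v-1) ((v+1)/2 - 1) : ℤ))
        + (if Even v then ((Nat.choose v (v/2) : ℤ)) else 0) := by
  rcases Nat.even_or_odd v with ⟨t, rfl⟩ | ⟨t, rfl⟩
  · rw [if_pos ⟨t, rfl⟩]
    rw [show (t+t+2)/2 - 1 = t by omega, show (t+t+1)/2 - 1 = t - 1 by omega,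
      show (t+t)/2 = t by omega]
    have key : (t+t) * Nat.choose (t+t) t = (t+t) * (2 * Nat.choose (t+t-1) (t-1)) := by
      cases t with
      | zero => simp
      | succ u =>
        congr 1
        rw [show u+1+(u+1) = (2*u+1)+1 by omega, show (2*u+1)+1-1 = 2*u+1 by omega,
          show u+1-1 = u by omega]
        rw [Nat.choose_succ_succ' (2*u+1) u, Nat.choose_symm_half u]
        omega
    have key2 : (t+t+1) * Nat.choose (t+t) t
        = 2 * ((t+t) * Nat.choose (t+t-1) (t-1)) + Nat.choose (t+t) t := by
      have : (t+t+1) * Nat.choose (t+t) t = (t+t) * Nat.choose (t+t) t + Nat.choose (t+t) t := by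
        ring
      rw [this, key]
      ring
    exact_mod_cast key2
  · have hodd : ¬ Even (2*t+1) := by
      rw [Nat.even_iff]; omega
    rw [if_neg hodd]
    rw [show (2*t+1+2)/2 - 1 = t by omega, show (2*t+1+1)/2 - 1 = t by omega,
      show 2*t+1-1 = 2*t by omega]
    have key : (2*t+1+1) * Nat.choose (2*t+1) t = 2 * ((2*t+1) * Nat.choose (2*t) t) := by
      have h1 : (2*t+1) * Nat.choose (2*t) t = Nat.choose (2*t+1) (t+1) * (t+1) :=
        Nat.add_one_mul_choose_eq (2*t) t
      have h2 : Nat.choose (2*t+1) (t+1) = Nat.choose (2*t+1) t := Nat.choose_symm_half t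
      rw [h1, h2]
      ring
    push_cast
    exact_mod_cast key
noncomputable def B (n i : ℕ) : ℤ :=
  ∑ w ∈ Finset.Icc 1 n,
    kraw n w i * (2 ^ (n - w) * w * Nat.choose (w - 1) ((w + 1) / 2 - 1) : ℤ)

def ccf (v : ℕ) : ℤ := (v : ℤ) * (Nat.choose (v-1) ((v+1)/2 - 1) : ℤ)

noncomputable def ddf (v : ℕ) : ℤ := if Even v then ((Nat.choose v (v/2) : ℤ)) else 0

lemma c_step' (v : ℕ) :
    ((v+1 : ℕ) : ℤ) * (Nat.choose v ((v+2)/2 - 1) : ℤ) = 2 * ccf v + ddf v := by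
  have := c_step v
  unfold ccf ddf
  exact_mod_cast this

lemma ccf_succ (v : ℕ) : ccf (v+1) = 2 * ccf v + ddf v := by
  have h := c_step' v
  unfold ccf
  rw [show v+1-1 = v by omega, show (v+1+1) = v+2 by omega]
  exact h

lemma dd_sum (m : ℕ) :
    ∑ v ∈ Finset.range (m+1), (m.choose v : ℤ) * (2^(m-v) * ddf v)
      = ((2*m).choose m : ℤ) := by
  have h1 : ∀ v, (m.choose v : ℤ) * (2^(m-v) * ddf v)
      = (if Even v then ((m.choose v : ℤ) * ((v.choose (v/2)) : ℤ) * 2^(m-v)) else 0) := by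
    intro v
    unfold ddf
    split
    · ring
    · simp
  rw [Finset.sum_congr rfl (fun v _ => h1 v), ← Finset.sum_filter]
  rw [← central_sum m]
  have h2 : ∀ x ∈ Finset.range (m+1),
      ((m.choose (2*x) : ℤ) * ((2*x).choose x : ℤ) * 2 ^ (m - 2*x)) ≠ 0 → 2*x ≤ m := by
    intro x _ hx
    by_contra hc
    apply hx
    rw [Nat.choose_eq_zero_of_lt (by omega : m < 2*x)]
    simp
  rw [← Finset.sum_filter_of_ne h2]
  refine Finset.sum_nbij' (i := fun v => v/2) (j := fun t => 2*t) ?_ ?_ ?_ ?_ ?_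
  · intro v hv
    simp only [Finset.mem_filter, Finset.mem_range, Nat.even_iff] at hv ⊢
    omega
  · intro t ht
    simp only [Finset.mem_filter, Finset.mem_range, Nat.even_iff] at ht ⊢
    omega
  · intro v hv
    simp only [Finset.mem_filter, Finset.mem_range, Nat.even_iff] at hv
    show 2 * (v / 2) = v
    omega
  · intro t ht
    simp only [Finset.mem_filter, Finset.mem_range, Nat.even_iff] at ht
    show 2 * t / 2 = t
    omega
  · intro v hv
    simp only [Finset.mem_filter, Finset.mem_range, Nat.even_iff] at hv
    have hv2 : 2 * (v/2) = v := by omega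
    rw [hv2]

lemma Bbase (m : ℕ) : B (m+1) 1 = -(((2*m).choose m : ℤ)) := by
  unfold B
  rw [← Finset.Ico_add_one_right_eq_Icc, Finset.sum_Ico_eq_sum_range,
    show m+1+1-1 = m+1 by omega]
  have hterm : ∀ v ∈ Finset.range (m+1),
      kraw (m+1) (1+v) 1 *
        (2 ^ (m+1-(1+v)) * ((1+v : ℕ) : ℤ) * (Nat.choose (1+v-1) ((1+v+1)/2-1) : ℤ))
      = ((m.choose (v+1) : ℤ) - (m.choose v : ℤ)) * (2^(m-v) * (2 * ccf v + ddf v)) := by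
    intro v hv
    rw [show 1+v = v+1 by omega]
    rw [kraw_x1 m v]
    rw [show m+1-(v+1) = m-v by omega, show v+1-1 = v by omega, show v+1+1 = v+2 by omega]
    rw [mul_assoc ((2:ℤ)^(m-v)), c_step' v]
  rw [Finset.sum_congr rfl hterm]
  have hsplit : ∀ v ∈ Finset.range (m+1),
      ((m.choose (v+1) : ℤ) - (m.choose v : ℤ)) * (2^(m-v) * (2 * ccf v + ddf v))
      = (m.choose (v+1) : ℤ) * (2^(m-v) * (2 * ccf v + ddf v))
        - (m.choose v : ℤ) * (2^(m-v) * (2 * ccf v + ddf v)) :=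
    fun v _ => sub_mul _ _ _
  rw [Finset.sum_congr rfl hsplit, Finset.sum_sub_distrib]
  have hA : ∑ v ∈ Finset.range (m+1), (m.choose (v+1) : ℤ) * (2^(m-v) * (2 * ccf v + ddf v))
      = ∑ v ∈ Finset.range (m+1), (m.choose v : ℤ) * (2^(m-v) * (2 * ccf v)) := by
    have h1 : ∀ v ∈ Finset.range (m+1),
        (m.choose (v+1) : ℤ) * (2^(m-v) * (2 * ccf v + ddf v))
        = (m.choose (v+1) : ℤ) * (2^(m+1-(v+1)) * ccf (v+1)) := by
      intro v _
      rw [ccf_succ, show m+1-(v+1) = m-v by omega]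
    rw [Finset.sum_congr rfl h1]
    have h2 := Finset.sum_range_succ' (fun u => (m.choose u : ℤ) * (2^(m+1-u) * ccf u)) (m+1)
    have h3 := Finset.sum_range_succ (fun u => (m.choose u : ℤ) * (2^(m+1-u) * ccf u)) (m+1)
    have h4 : (m.choose (m+1) : ℤ) * (2^(m+1-(m+1)) * ccf (m+1)) = 0 := by
      simp [Nat.choose_succ_self]
    have hG0 : (m.choose 0 : ℤ) * (2^(m+1-0) * ccf 0) = 0 := by
      simp [ccf]
    have h5 : ∑ v ∈ Finset.range (m+1), (m.choose (v+1) : ℤ) * (2^(m+1-(v+1)) * ccf (v+1))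
        = ∑ v ∈ Finset.range (m+1), (m.choose v : ℤ) * (2^(m+1-v) * ccf v) := by
      rw [h4] at h3
      rw [hG0] at h2
      linarith
    rw [h5]
    refine Finset.sum_congr rfl fun v hv => ?_
    simp only [Finset.mem_range] at hv
    rw [show m+1-v = (m-v)+1 by omega, pow_succ]
    ring
  rw [hA, ← Finset.sum_sub_distrib]
  have h6 : ∀ v ∈ Finset.range (m+1),
      (m.choose v : ℤ) * (2^(m-v) * (2 * ccf v))
        - (m.choose v : ℤ) * (2^(m-v) * (2*ccf v + ddf v))
      = -((m.choose v : ℤ) * (2^(m-v) * ddf v)) := fun v _ => by ring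
  rw [Finset.sum_congr rfl h6, Finset.sum_neg_distrib, dd_sum m]

lemma Brec {n i : ℕ} (h1 : i + 1 ≤ n) :
    B n i + B n (i+1) = 4 * B (n-1) i := by
  obtain ⟨m, rfl⟩ : ∃ m, n = m + 1 := ⟨n-1, by omega⟩
  rw [show m+1-1 = m by omega]
  unfold B
  rw [← Finset.sum_add_distrib]
  have hstep : ∀ w ∈ Finset.Icc 1 (m+1),
      kraw (m+1) w i * (2 ^ (m+1-w) * w * Nat.choose (w-1) ((w+1)/2-1) : ℤ)
        + kraw (m+1) w (i+1) * (2 ^ (m+1-w) * w * Nat.choose (w-1) ((w+1)/2-1) : ℤ)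
      = 2 * kraw m w i * (2 ^ (m+1-w) * w * Nat.choose (w-1) ((w+1)/2-1) : ℤ) := by
    intro w hw
    rw [← add_mul, kraw_add (by omega : i ≤ m) w]
  rw [Finset.sum_congr rfl hstep]
  rw [Finset.sum_Icc_succ_top (by omega : 1 ≤ m+1)]
  rw [kraw_big (by omega : i ≤ m) (by omega : m < m+1)]
  rw [Finset.mul_sum]
  simp only [mul_zero, zero_mul, add_zero]
  refine Finset.sum_congr rfl fun w hw => ?_
  have hw' : w ≤ m := (Finset.mem_Icc.mp hw).2
  rw [show m+1-w = (m-w)+1 by omega, pow_succ]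
  ring
lemma mainL : ∀ n, ∀ i, 1 ≤ i → 2*i ≤ n+1 →
    B n i = (-1)^i * Zc (2*i-2) (2*n-2*i) (n-1) := by
  intro n
  induction n with
  | zero => intro i h1 h2; omega
  | succ n ih =>
    intro i
    induction i with
    | zero => intro h1 _; omega
    | succ i ihi =>
      intro h1 h2
      rcases Nat.eq_zero_or_pos i with rfl | hpos
      · rw [Bbase n]
        rw [show 2*(0+1)-2 = 0 by omega, Zc_zero]
        rw [show 2*(n+1)-2*(0+1) = 2*n by omega, show n+1-1 = n by omega]
        ring
      · have hrec := Brec (n := n+1) (i := i) (by omega)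
        rw [show n+1-1 = n by omega] at hrec
        have e1 := ih i hpos (by omega)
        have e2 := ihi hpos (by omega)
        have e3 := Zc_rec (2*i-2) (2*n-2*i) (n-1)
        rw [show 2*n-2*i+2 = 2*(n+1)-2*i by omega, show n-1+1 = n by omega,
            show 2*i-2+2 = 2*i by omega] at e3
        rw [show n+1-1 = n by omega] at e2
        rw [show 2*(i+1)-2 = 2*i by omega, show 2*(n+1)-2*(i+1) = 2*n-2*i by omega,
            show n+1-1 = n by omega]
        have hp : ((-1:ℤ))^(i+1) = -(-1)^i := by rw [pow_succ]; ring
        rw [hp]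
        linear_combination hrec - e2 + 4*e1 - (-1:ℤ)^i * e3

lemma partR (n i : ℕ) (hn : 1 ≤ n) (hi1 : 1 ≤ i) (hi2 : 2*i ≤ n+1) :
    ∑ w ∈ Finset.range n, kraw (n-1) w (2*i-2) * ((n-1).choose w : ℤ)
      = Zc (2*i-2) (2*n-2*i) (n-1) := by
  unfold Zc
  have hsplit : ((1:ℤ[X]) - X) ^ (2*i-2) * ((1:ℤ[X]) + X) ^ (2*n-2*i)
      = (((1:ℤ[X]) - X) ^ (2*i-2) * ((1:ℤ[X]) + X) ^ ((n-1) - (2*i-2)))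
          * ((1:ℤ[X]) + X) ^ (n-1) := by
    rw [mul_assoc, ← pow_add, show (n-1) - (2*i-2) + (n-1) = 2*n-2*i by omega]
  rw [hsplit, coeff_mul, Finset.Nat.sum_antidiagonal_eq_sum_range_succ_mk,
    show (n-1).succ = n by omega]
  refine Finset.sum_congr rfl fun w hw => ?_
  rw [← kraw_coeff, coeff_one_add_X_pow]
  have hw' : w ≤ n - 1 := by
    simp only [Finset.mem_range] at hw
    omega
  rw [Nat.choose_symm hw']

/-- For `n ≥ 1` and `1 ≤ i ≤ ⌊(n+1)/2⌋`,
`Σ_{w=1}^n K_w^{(n)}(i)·2^{n−w}·w·C(w−1,⌈w/2⌉−1)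
   = (−1)^i·Σ_{w=0}^{n−1} K_w^{(n−1)}(2i−2)·C(n−1,w)`. -/
theorem krawtchouk_lambda_identity (n i : ℕ) (hn : 1 ≤ n)
    (hi1 : 1 ≤ i) (hi2 : i ≤ (n + 1) / 2) :
    ∑ w ∈ Finset.Icc 1 n,
        kraw n w i * (2 ^ (n - w) * w * Nat.choose (w - 1) ((w + 1) / 2 - 1) : ℤ)
      = (-1 : ℤ) ^ i *
        ∑ w ∈ Finset.range n, kraw (n - 1) w (2 * i - 2) * (Nat.choose (n - 1) w : ℤ) := by
  have h2i : 2*i ≤ n+1 := by omega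
  have hL : (∑ w ∈ Finset.Icc 1 n,
      kraw n w i * (2 ^ (n - w) * w * Nat.choose (w - 1) ((w + 1) / 2 - 1) : ℤ)) = B n i := rfl
  rw [hL, mainL n i hi1 h2i, ← partR n i hn hi1 h2i]
end

section
/- For all integers n ≥ 1, 1 ≤ k ≤ n, and 0 ≤ t ≤ n−1, the partial sums of Krawtchouk values against the binomial weight satisfy Σ_{i=0}^t C(n,i)·K_k^{(n)}(i) = C(n,k)·K_t^{(n−1)}(k−1). Moreover, for t = n one has Σ_{i=0}^n C(n,i)·K_k^{(n)}(i) = 0 for every k with 1 ≤ k ≤ n. -/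
lemma choose_trinom (m a b : ℕ) :
    m.choose a * (m - a).choose b = m.choose b * (m - b).choose a := by
  rcases lt_or_ge m a with h | ha
  · rw [Nat.choose_eq_zero_of_lt h, Nat.choose_eq_zero_of_lt (by omega : m - b < a)]
    ring
  rcases lt_or_ge m b with h | hb
  · rw [Nat.choose_eq_zero_of_lt h, Nat.choose_eq_zero_of_lt (by omega : m - a < b)]
    ring
  rcases le_or_gt (a + b) m with h | h
  · have h1 := Nat.choose_mul (n := m) (k := a + b) (s := a) (Nat.le_add_right a b)
    have h2 := Nat.choose_mul (n := m) (k := a + b) (s := b) (Nat.le_add_left b a)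
    rw [show a + b - a = b by omega] at h1
    rw [show a + b - b = a by omega] at h2
    have h3 : (a + b).choose a = (a + b).choose b := by
      rw [← Nat.choose_symm (Nat.le_add_left b a)]
      congr 1; omega
    rw [← h1, ← h2, h3]
  · rw [Nat.choose_eq_zero_of_lt (by omega : m - a < b),
      Nat.choose_eq_zero_of_lt (by omega : m - b < a)]
    ring

lemma trinom_full {n i k j : ℕ} (hi : i ≤ n) (hk : k ≤ n) (hji : j ≤ i) (hjk : j ≤ k) :
    n.choose i * i.choose j * (n - i).choose (k - j)
      = n.choose k * k.choose j * (n - k).choose (i - j) := by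
  rw [Nat.choose_mul hji, Nat.choose_mul hjk]
  rw [show n - i = (n - j) - (i - j) by omega, show n - k = (n - j) - (k - j) by omega]
  rw [mul_assoc, mul_assoc, choose_trinom]

lemma kraw_reciprocity {n i k : ℕ} (hi : i ≤ n) (hk : k ≤ n) :
    (n.choose i : ℤ) * kraw n k i = (n.choose k : ℤ) * kraw n i k := by
  unfold kraw
  rw [Finset.mul_sum, Finset.mul_sum]
  have hm1 := min_le_left i k
  have hm2 := min_le_right i k
  have hm3 := min_choice i k
  rw [← Finset.sum_subset (s₁ := Finset.range (min i k + 1)) (s₂ := Finset.range (k + 1))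
      (Finset.range_subset_range.2 (by omega)) (fun j hj hj' => by
        simp only [Finset.mem_range] at hj hj'
        rw [Nat.choose_eq_zero_of_lt (show i < j by omega)]
        push_cast; ring)]
  rw [← Finset.sum_subset (s₁ := Finset.range (min i k + 1)) (s₂ := Finset.range (i + 1))
      (Finset.range_subset_range.2 (by omega)) (fun j hj hj' => by
        simp only [Finset.mem_range] at hj hj'
        rw [Nat.choose_eq_zero_of_lt (show k < j by omega)]
        push_cast; ring)]
  refine Finset.sum_congr rfl fun j hj => ?_
  simp only [Finset.mem_range] at hj
  have hji : j ≤ i := by omega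
  have hjk : j ≤ k := by omega
  have h := trinom_full hi hk hji hjk
  have h' : (n.choose i * i.choose j * (n - i).choose (k - j) : ℤ)
      = (n.choose k * k.choose j * (n - k).choose (i - j) : ℤ) := by exact_mod_cast h
  linear_combination ((-1 : ℤ) ^ j) * h'

lemma kraw_succ_split (n m t : ℕ) :
    kraw n (t + 1) (m + 1) = kraw (n - 1) (t + 1) m - kraw (n - 1) t m := by
  unfold kraw
  rw [show n - (m + 1) = n - 1 - m by omega]
  rw [Finset.sum_range_succ' (fun i => (-1 : ℤ) ^ i * ((m + 1).choose i : ℤ)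
      * ((n - 1 - m).choose (t + 1 - i) : ℤ)) (t + 1)]
  rw [Finset.sum_range_succ' (fun i => (-1 : ℤ) ^ i * (m.choose i : ℤ)
      * ((n - 1 - m).choose (t + 1 - i) : ℤ)) (t + 1)]
  have e : ∀ j ∈ Finset.range (t + 1),
      ((-1 : ℤ) ^ (j + 1) * ((m + 1).choose (j + 1) : ℤ)
        * ((n - 1 - m).choose (t + 1 - (j + 1)) : ℤ))
      = ((-1 : ℤ) ^ (j + 1) * (m.choose (j + 1) : ℤ)
          * ((n - 1 - m).choose (t + 1 - (j + 1)) : ℤ)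
        - (-1 : ℤ) ^ j * (m.choose j : ℤ) * ((n - 1 - m).choose (t - j) : ℤ)) := by
    intro j hj
    rw [Nat.choose_succ_succ', show t + 1 - (j + 1) = t - j by omega]
    push_cast; ring
  rw [Finset.sum_congr rfl e, Finset.sum_sub_distrib]
  push_cast
  simp only [Nat.choose_zero_right, Nat.sub_zero]
  push_cast
  ring

lemma kraw_sum (n m t : ℕ) :
    ∑ i ∈ Finset.range (t + 1), kraw n i (m + 1) = kraw (n - 1) t m := by
  induction t with
  | zero => simp [kraw]
  | succ t ih => rw [Finset.sum_range_succ, ih, kraw_succ_split]; ring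

/-- For `n ≥ 1` and `1 ≤ k ≤ n`: for every `t ≤ n−1`,
`Σ_{i=0}^t C(n,i)·K_k^{(n)}(i) = C(n,k)·K_t^{(n−1)}(k−1)`, and for `t = n` the full sum
`Σ_{i=0}^n C(n,i)·K_k^{(n)}(i)` vanishes. -/
theorem krawtchouk_partial_sums (n k : ℕ) (hn : 1 ≤ n) (hk1 : 1 ≤ k) (hk2 : k ≤ n) :
    (∀ t : ℕ, t ≤ n - 1 →
      ∑ i ∈ Finset.range (t + 1), (Nat.choose n i : ℤ) * kraw n k i
        = (Nat.choose n k : ℤ) * kraw (n - 1) t (k - 1))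
    ∧ ∑ i ∈ Finset.range (n + 1), (Nat.choose n i : ℤ) * kraw n k i = 0 := by
  obtain ⟨m, rfl⟩ : ∃ m, k = m + 1 := ⟨k - 1, by omega⟩
  have key : ∀ t : ℕ, t ≤ n →
      ∑ i ∈ Finset.range (t + 1), (Nat.choose n i : ℤ) * kraw n (m + 1) i
        = (Nat.choose n (m + 1) : ℤ) * kraw (n - 1) t m := by
    intro t ht
    have : ∀ i ∈ Finset.range (t + 1),
        (Nat.choose n i : ℤ) * kraw n (m + 1) i
          = (Nat.choose n (m + 1) : ℤ) * kraw n i (m + 1) := by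
      intro i hi
      simp only [Finset.mem_range] at hi
      exact kraw_reciprocity (by omega) hk2
    rw [Finset.sum_congr rfl this, ← Finset.mul_sum, kraw_sum]
  constructor
  · intro t ht
    rw [key t (by omega)]
    simp
  · rw [key n le_rfl]
    have : kraw (n - 1) n m = 0 := by
      unfold kraw
      refine Finset.sum_eq_zero fun i hi => ?_
      simp only [Finset.mem_range] at hi
      rcases le_or_gt i m with h | h
      · rw [Nat.choose_eq_zero_of_lt (show n - 1 - m < n - i by omega)]
        ring
      · rw [Nat.choose_eq_zero_of_lt h]
        ring
    rw [this, mul_zero]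
end

section
/- Let X = {0,1}^n and let x,y ∈ X with d(x,y) = w. For every t ∈ {0,…,n}, the size of the intersection of the Hamming balls B(x,t) and B(y,t) has the Krawtchouk expansion |B(x,t) ∩ B(y,t)| = 2^{−n}·Σ_{k=0}^n c_k(t)²·K_k^{(n)}(w), where c_0(t) = Σ_{i=0}^t C(n,i), and for k = 1,…,n: c_k(t) = K_t^{(n−1)}(k−1) if t ≤ n−1, and c_k(n) = 0. -/
open Finset
open scoped symmDiff

/-- The coefficients `c_k(t)`: `c_0(t) = Σ_{i=0}^t C(n,i)`; for `k ≥ 1`,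
`c_k(t) = K_t^{(n−1)}(k−1)` if `t ≤ n−1` and `c_k(n) = 0`. -/
noncomputable def ckt (n t k : ℕ) : ℝ :=
  if k = 0 then ∑ i ∈ Finset.range (t + 1), (Nat.choose n i : ℝ)
  else if t < n then (kraw (n - 1) t (k - 1) : ℝ) else 0

section aux
variable {α : Type*} [DecidableEq α]

lemma aux_card (Ω S : Finset α) (hS : S ⊆ Ω) (i j : ℕ) (hji : j ≤ i) :
    ((Ω.powersetCard i).filter (fun u => (u ∩ S).card = j)).card
      = S.card.choose j * (Ω \ S).card.choose (i - j) := by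
  rw [← Finset.card_powersetCard, ← Finset.card_powersetCard, ← Finset.card_product]
  apply Finset.card_bij' (fun u (_ : u ∈ _) => (u ∩ S, u \ S))
    (fun p (_ : p ∈ _) => p.1 ∪ p.2)
  · rintro u hu
    simp only [mem_filter, mem_powersetCard] at hu
    obtain ⟨⟨hu1, hu2⟩, hu3⟩ := hu
    have hc := Finset.card_inter_add_card_sdiff u S
    simp only [mem_product, mem_powersetCard]
    refine ⟨⟨inter_subset_right, hu3⟩, Finset.sdiff_subset_sdiff hu1 (le_refl S), by omega⟩
  · rintro p hp
    simp only [mem_product, mem_powersetCard] at hp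
    obtain ⟨⟨hp1, hp2⟩, hp3, hp4⟩ := hp
    have hd : Disjoint p.1 p.2 :=
      Finset.disjoint_of_subset_left hp1 (Finset.disjoint_of_subset_right hp3 disjoint_sdiff)
    simp only [mem_filter, mem_powersetCard]
    have hsub : p.1 ∪ p.2 ⊆ Ω := union_subset (hp1.trans hS) (hp3.trans (sdiff_subset))
    have hcard : (p.1 ∪ p.2).card = i := by
      rw [Finset.card_union_of_disjoint hd]; omega
    refine ⟨⟨hsub, hcard⟩, ?_⟩
    have : (p.1 ∪ p.2) ∩ S = p.1 := by
      ext a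
      simp only [mem_inter, mem_union]
      constructor
      · rintro ⟨h1 | h1, h2⟩
        · exact h1
        · exact absurd h2 (by have := hp3 h1; simp only [mem_sdiff] at this; exact this.2)
      · intro h; exact ⟨Or.inl h, hp1 h⟩
    rw [this, hp2]
  · intro u hu
    rw [union_comm, Finset.sdiff_union_inter]
  · rintro p hp
    simp only [mem_product, mem_powersetCard] at hp
    obtain ⟨⟨hp1, hp2⟩, hp3, hp4⟩ := hp
    have h1 : (p.1 ∪ p.2) ∩ S = p.1 := by
      ext a
      simp only [mem_inter, mem_union]
      constructor
      · rintro ⟨h1 | h1, h2⟩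
        · exact h1
        · exact absurd h2 (by have := hp3 h1; simp only [mem_sdiff] at this; exact this.2)
      · intro h; exact ⟨Or.inl h, hp1 h⟩
    have h2 : (p.1 ∪ p.2) \ S = p.2 := by
      ext a
      simp only [mem_sdiff, mem_union]
      constructor
      · rintro ⟨h1 | h1, h2⟩
        · exact absurd (hp1 h1) h2
        · exact h1
      · intro h
        have := hp3 h; simp only [mem_sdiff] at this
        exact ⟨Or.inr h, this.2⟩
    simp [h1, h2]

lemma sphere_sum (Ω S : Finset α) (hS : S ⊆ Ω) (i : ℕ) :
    ∑ u ∈ Ω.powersetCard i, (-1 : ℤ) ^ ((u ∩ S).card) = kraw Ω.card i S.card := by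
  have hmap : ∀ u ∈ Ω.powersetCard i, (u ∩ S).card ∈ range (i + 1) := by
    intro u hu
    rw [mem_powersetCard] at hu
    rw [mem_range, Nat.lt_succ_iff, ← hu.2]
    exact card_le_card inter_subset_left
  rw [← Finset.sum_fiberwise_of_maps_to hmap]
  unfold kraw
  refine Finset.sum_congr rfl fun j hj => ?_
  rw [mem_range, Nat.lt_succ_iff] at hj
  have : ∀ u ∈ (Ω.powersetCard i).filter (fun u => (u ∩ S).card = j),
      (-1 : ℤ) ^ ((u ∩ S).card) = (-1) ^ j := by
    intro u hu
    rw [mem_filter] at hu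
    rw [hu.2]
  rw [Finset.sum_congr rfl this, Finset.sum_const, aux_card Ω S hS i j hj,
    Finset.card_sdiff_of_subset hS]
  push_cast
  ring

lemma flip_sign {a : α} {S : Finset α} (ha : a ∈ S) (u : Finset α) :
    (-1 : ℤ) ^ (((if a ∈ u then u.erase a else insert a u) ∩ S).card)
      = -(-1 : ℤ) ^ ((u ∩ S).card) := by
  by_cases h : a ∈ u
  · simp only [h, if_true]
    have h1 : u.erase a ∩ S = (u ∩ S).erase a := by
      ext b; simp only [mem_inter, mem_erase]; tauto
    have h2 : a ∈ u ∩ S := mem_inter.2 ⟨h, ha⟩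
    have h3 : (u ∩ S).card = ((u ∩ S).erase a).card + 1 := by
      rw [Finset.card_erase_of_mem h2]
      have := Finset.card_pos.2 ⟨a, h2⟩
      omega
    rw [h1, h3, pow_succ]
    ring
  · simp only [h, if_false]
    have h1 : insert a u ∩ S = insert a (u ∩ S) := by
      ext b; simp only [mem_inter, mem_insert]; constructor
      · rintro ⟨hb | hb, hbS⟩
        · exact Or.inl hb
        · exact Or.inr ⟨hb, hbS⟩
      · rintro (rfl | ⟨hb, hbS⟩)
        · exact ⟨Or.inl rfl, ha⟩
        · exact ⟨Or.inr hb, hbS⟩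
    have h2 : a ∉ u ∩ S := fun hc => h (mem_inter.1 hc).1
    rw [h1, Finset.card_insert_of_notMem h2, pow_succ]
    ring

lemma orth (Ω S : Finset α) (hS : S ⊆ Ω) :
    ∑ u ∈ Ω.powerset, (-1 : ℤ) ^ ((u ∩ S).card)
      = if S = ∅ then 2 ^ Ω.card else 0 := by
  rcases eq_or_ne S ∅ with rfl | hne
  · simp [Finset.card_powerset]
  · rw [if_neg hne]
    obtain ⟨a, ha⟩ := Finset.nonempty_iff_ne_empty.2 hne
    have haΩ : a ∈ Ω := hS ha
    refine Finset.sum_involution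
      (fun u _ => if a ∈ u then u.erase a else insert a u)
      (fun u hu => by rw [flip_sign ha u]; ring)
      (fun u hu h => ?_) (fun u hu => ?_) (fun u hu => ?_)
    · by_cases hau : a ∈ u
      · simp only [hau, if_true]
        intro hc
        exact Finset.notMem_erase a u (by rw [hc]; exact hau)
      · simp only [hau, if_false]
        intro hc
        exact hau (by rw [← hc]; exact Finset.mem_insert_self a u)
    · rw [Finset.mem_powerset] at hu ⊢
      by_cases hau : a ∈ u
      · simp only [hau, if_true]
        exact (Finset.erase_subset a u).trans hu
      · simp only [hau, if_false]
        exact Finset.insert_subset haΩ hu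
    · by_cases hau : a ∈ u
      · simp [hau, Finset.notMem_erase, Finset.insert_erase hau]
      · simp [hau, Finset.mem_insert_self, Finset.erase_insert hau]

lemma ball_sum (Ω S : Finset α) (hS : S ⊆ Ω) (t : ℕ) :
    ∑ u ∈ Ω.powerset.filter (fun u => u.card ≤ t), (-1 : ℤ) ^ ((u ∩ S).card)
      = ∑ i ∈ range (t + 1), kraw Ω.card i S.card := by
  have hmap : ∀ u ∈ Ω.powerset.filter (fun u => u.card ≤ t), u.card ∈ range (t + 1) := by
    intro u hu
    rw [mem_filter] at hu
    rw [mem_range]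
    omega
  rw [← Finset.sum_fiberwise_of_maps_to hmap]
  refine Finset.sum_congr rfl fun i hi => ?_
  rw [mem_range, Nat.lt_succ_iff] at hi
  have hset : (Ω.powerset.filter (fun u => u.card ≤ t)).filter (fun u => u.card = i)
      = Ω.powersetCard i := by
    ext u
    simp only [mem_filter, mem_powerset, mem_powersetCard]
    constructor
    · rintro ⟨⟨h1, _⟩, h3⟩; exact ⟨h1, h3⟩
    · rintro ⟨h1, h3⟩; exact ⟨⟨h1, by omega⟩, h3⟩
  rw [hset, sphere_sum Ω S hS i]

lemma ball_sum' (Ω S : Finset α) (hS : S ⊆ Ω) {a : α} (ha : a ∈ S) (t : ℕ) :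
    ∑ u ∈ Ω.powerset.filter (fun u => u.card ≤ t), (-1 : ℤ) ^ ((u ∩ S).card)
      = kraw (Ω.card - 1) t (S.card - 1) := by
  have haΩ : a ∈ Ω := hS ha
  set B := Ω.powerset.filter (fun u => u.card ≤ t) with hB
  have hsplit := Finset.sum_filter_add_sum_filter_not B
    (fun u => u.card = t ∧ a ∉ u) (fun u => (-1 : ℤ) ^ ((u ∩ S).card))
  -- the "rest" part vanishes by involution
  have hrest : ∑ u ∈ B.filter (fun u => ¬(u.card = t ∧ a ∉ u)),
      (-1 : ℤ) ^ ((u ∩ S).card) = 0 := by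
    refine Finset.sum_involution
      (fun u _ => if a ∈ u then u.erase a else insert a u)
      (fun u hu => by rw [flip_sign ha u]; ring)
      (fun u hu h => ?_) (fun u hu => ?_) (fun u hu => ?_)
    · by_cases hau : a ∈ u
      · simp only [hau, if_true]
        intro hc
        exact Finset.notMem_erase a u (by rw [hc]; exact hau)
      · simp only [hau, if_false]
        intro hc
        exact hau (by rw [← hc]; exact Finset.mem_insert_self a u)
    · simp only [hB, mem_filter, mem_powerset] at hu ⊢
      obtain ⟨⟨h1, h2⟩, h3⟩ := hu
      by_cases hau : a ∈ u
      · simp only [hau, if_true]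
        have hcpos : 1 ≤ u.card := Finset.card_pos.2 ⟨a, hau⟩
        have hce : (u.erase a).card = u.card - 1 := Finset.card_erase_of_mem hau
        refine ⟨⟨(Finset.erase_subset a u).trans h1, by omega⟩, ?_⟩
        rintro ⟨hc, -⟩
        omega
      · simp only [hau, if_false]
        have hct : u.card < t := by
          rcases Nat.lt_or_ge u.card t with h | h
          · exact h
          · exact absurd ⟨by omega, hau⟩ h3
        have hci : (insert a u).card = u.card + 1 := Finset.card_insert_of_notMem hau
        refine ⟨⟨Finset.insert_subset haΩ h1, by omega⟩, ?_⟩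
        rintro ⟨-, hc⟩
        exact hc (Finset.mem_insert_self a u)
    · by_cases hau : a ∈ u
      · simp [hau, Finset.notMem_erase, Finset.insert_erase hau]
      · simp [hau, Finset.mem_insert_self, Finset.erase_insert hau]
  -- the remaining part is the sphere of radius t in Ω.erase a
  have hmain : B.filter (fun u => u.card = t ∧ a ∉ u) = (Ω.erase a).powersetCard t := by
    ext u
    simp only [hB, mem_filter, mem_powerset, mem_powersetCard, Finset.subset_erase]
    constructor
    · rintro ⟨⟨h1, h2⟩, h3, h4⟩; exact ⟨⟨h1, h4⟩, h3⟩
    · rintro ⟨⟨h1, h4⟩, h3⟩; exact ⟨⟨h1, le_of_eq h3⟩, h3, h4⟩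
  have hsphere : ∑ u ∈ (Ω.erase a).powersetCard t, (-1 : ℤ) ^ ((u ∩ S).card)
      = kraw (Ω.card - 1) t (S.card - 1) := by
    have hsub : S.erase a ⊆ Ω.erase a := Finset.erase_subset_erase a hS
    have := sphere_sum (Ω.erase a) (S.erase a) hsub t
    rw [Finset.card_erase_of_mem haΩ, Finset.card_erase_of_mem ha] at this
    rw [← this]
    refine Finset.sum_congr rfl fun u hu => ?_
    rw [mem_powersetCard, Finset.subset_erase] at hu
    have : u ∩ S.erase a = u ∩ S := by
      ext b
      simp only [mem_inter, mem_erase]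
      constructor
      · rintro ⟨h1, -, h2⟩; exact ⟨h1, h2⟩
      · rintro ⟨h1, h2⟩
        exact ⟨h1, fun hc => hu.1.2 (hc ▸ h1), h2⟩
    rw [this]
  rw [← hsplit, hrest, add_zero, hmain, hsphere]

lemma coeff_eq (Ω S : Finset α) (hS : S ⊆ Ω) {a : α} (ha : a ∈ S) (t : ℕ) :
    ∑ i ∈ range (t + 1), kraw Ω.card i S.card = kraw (Ω.card - 1) t (S.card - 1) :=
  (ball_sum Ω S hS t).symm.trans (ball_sum' Ω S hS ha t)

lemma neg_one_pow_symmDiff (A B : Finset α) :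
    (-1 : ℤ) ^ ((A ∆ B).card) = (-1) ^ A.card * (-1) ^ B.card := by
  have hcd : (A ∆ B).card = (A \ B).card + (B \ A).card := by
    rw [symmDiff_def]
    exact Finset.card_union_of_disjoint disjoint_sdiff_sdiff
  have h1 := Finset.card_sdiff_add_card_inter A B
  have h2 := Finset.card_sdiff_add_card_inter B A
  have hic : (B ∩ A).card = (A ∩ B).card := by rw [Finset.inter_comm]
  have key : (A ∆ B).card + 2 * (A ∩ B).card = A.card + B.card := by omega
  have : ((-1 : ℤ)) ^ (A.card + B.card) = (-1) ^ ((A ∆ B).card + 2 * (A ∩ B).card) := by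
    rw [key]
  rw [← pow_add, this, pow_add, pow_mul]
  norm_num

lemma symmdiff_sign (U V S : Finset α) :
    (-1 : ℤ) ^ (((U ∆ V) ∩ S).card)
      = (-1 : ℤ) ^ ((U ∩ S).card) * (-1 : ℤ) ^ ((V ∩ S).card) := by
  have h : (U ∆ V) ∩ S = (U ∩ S) ∆ (V ∩ S) := by
    have := inf_symmDiff_distrib_right (a := U) (b := V) (c := S)
    simpa using this
  rw [h, neg_one_pow_symmDiff]

lemma inv_sum (Ω V : Finset α) (hV : V ⊆ Ω) (t : ℕ) :
    ∑ S ∈ Ω.powerset,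
        (∑ i ∈ range (t + 1), kraw Ω.card i S.card) * (-1 : ℤ) ^ ((S ∩ V).card)
      = if V.card ≤ t then 2 ^ Ω.card else 0 := by
  set B := Ω.powerset.filter (fun u => u.card ≤ t) with hB
  have step1 : ∀ S ∈ Ω.powerset,
      (∑ i ∈ range (t + 1), kraw Ω.card i S.card) * (-1 : ℤ) ^ ((S ∩ V).card)
        = ∑ u ∈ B, (-1 : ℤ) ^ (((u ∆ V) ∩ S).card) := by
    intro S hSmem
    rw [mem_powerset] at hSmem
    rw [← ball_sum Ω S hSmem t, Finset.sum_mul]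
    refine Finset.sum_congr rfl fun u hu => ?_
    rw [symmdiff_sign, Finset.inter_comm S V]
  rw [Finset.sum_congr rfl step1, Finset.sum_comm]
  have step2 : ∀ u ∈ B, ∑ S ∈ Ω.powerset, (-1 : ℤ) ^ (((u ∆ V) ∩ S).card)
      = if u = V then 2 ^ Ω.card else 0 := by
    intro u hu
    rw [hB, mem_filter, mem_powerset] at hu
    have hsub : u ∆ V ⊆ Ω := (symmDiff_le_sup (a := u) (b := V)).trans (union_subset hu.1 hV)
    have := orth Ω (u ∆ V) hsub
    rw [Finset.sum_congr rfl (fun S _ => by rw [Finset.inter_comm]), this]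
    congr 1
    simp [symmDiff_eq_bot, ← Finset.bot_eq_empty]
  rw [Finset.sum_congr rfl step2, Finset.sum_ite_eq' B V]
  congr 1
  simp only [hB, mem_filter, mem_powerset]
  simp [hV]

lemma main_int (Ω X Y : Finset α) (hX : X ⊆ Ω) (hY : Y ⊆ Ω) (t : ℕ) :
    (2 : ℤ) ^ Ω.card *
        ∑ Z ∈ Ω.powerset, (if (X ∆ Z).card ≤ t ∧ (Y ∆ Z).card ≤ t then (1 : ℤ) else 0)
      = ∑ k ∈ range (Ω.card + 1),
          (∑ i ∈ range (t + 1), kraw Ω.card i k) ^ 2 * kraw Ω.card k ((X ∆ Y).card) := by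
  set n := Ω.card with hn
  set c : Finset α → ℤ := fun S => ∑ i ∈ range (t + 1), kraw n i S.card with hc
  have hXZ : ∀ Z ∈ Ω.powerset, X ∆ Z ⊆ Ω := fun Z hZ =>
    (symmDiff_le_sup (a := X) (b := Z)).trans (union_subset hX (mem_powerset.1 hZ))
  have hYZ : ∀ Z ∈ Ω.powerset, Y ∆ Z ⊆ Ω := fun Z hZ =>
    (symmDiff_le_sup (a := Y) (b := Z)).trans (union_subset hY (mem_powerset.1 hZ))
  -- Step 1: expand the indicator product
  have key : ∀ Z ∈ Ω.powerset,
      (if (X ∆ Z).card ≤ t then (2 : ℤ) ^ n else 0) *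
          (if (Y ∆ Z).card ≤ t then (2 : ℤ) ^ n else 0)
        = ∑ S ∈ Ω.powerset, ∑ T ∈ Ω.powerset,
            (c S * (-1 : ℤ) ^ ((X ∩ S).card) * (c T * (-1 : ℤ) ^ ((Y ∩ T).card)))
              * ((-1 : ℤ) ^ ((Z ∩ S).card) * (-1 : ℤ) ^ ((Z ∩ T).card)) := by
    intro Z hZ
    rw [← inv_sum Ω (X ∆ Z) (hXZ Z hZ) t, ← inv_sum Ω (Y ∆ Z) (hYZ Z hZ) t,
      Finset.sum_mul_sum]
    refine Finset.sum_congr rfl fun S _ => Finset.sum_congr rfl fun T _ => ?_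
    rw [Finset.inter_comm S (X ∆ Z), Finset.inter_comm T (Y ∆ Z),
      symmdiff_sign X Z S, symmdiff_sign Y Z T,
      Finset.inter_comm Z S, Finset.inter_comm Z T]
    ring
  -- Step 2: the doubled identity
  have doubled :
      (2 : ℤ) ^ n * ((2 : ℤ) ^ n *
        ∑ Z ∈ Ω.powerset, (if (X ∆ Z).card ≤ t ∧ (Y ∆ Z).card ≤ t then (1 : ℤ) else 0))
        = ∑ Z ∈ Ω.powerset, ∑ S ∈ Ω.powerset, ∑ T ∈ Ω.powerset,
            (c S * (-1 : ℤ) ^ ((X ∩ S).card) * (c T * (-1 : ℤ) ^ ((Y ∩ T).card)))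
              * ((-1 : ℤ) ^ ((Z ∩ S).card) * (-1 : ℤ) ^ ((Z ∩ T).card)) := by
    rw [← Finset.sum_congr rfl key]
    rw [Finset.mul_sum, Finset.mul_sum]
    refine Finset.sum_congr rfl fun Z _ => ?_
    by_cases h1 : (X ∆ Z).card ≤ t <;> by_cases h2 : (Y ∆ Z).card ≤ t <;>
      simp [h1, h2] <;> ring
  -- Step 3: swap and collapse the Z-sum
  have swap : ∑ Z ∈ Ω.powerset, ∑ S ∈ Ω.powerset, ∑ T ∈ Ω.powerset,
        (c S * (-1 : ℤ) ^ ((X ∩ S).card) * (c T * (-1 : ℤ) ^ ((Y ∩ T).card)))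
          * ((-1 : ℤ) ^ ((Z ∩ S).card) * (-1 : ℤ) ^ ((Z ∩ T).card))
      = ∑ S ∈ Ω.powerset, ∑ T ∈ Ω.powerset,
          (c S * (-1 : ℤ) ^ ((X ∩ S).card) * (c T * (-1 : ℤ) ^ ((Y ∩ T).card)))
            * (if S = T then (2 : ℤ) ^ n else 0) := by
    rw [Finset.sum_comm]
    refine Finset.sum_congr rfl fun S hS => ?_
    rw [Finset.sum_comm]
    refine Finset.sum_congr rfl fun T hT => ?_
    have hsub : S ∆ T ⊆ Ω := (symmDiff_le_sup (a := S) (b := T)).trans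
      (union_subset (mem_powerset.1 hS) (mem_powerset.1 hT))
    have inner : ∑ Z ∈ Ω.powerset,
        ((-1 : ℤ) ^ ((Z ∩ S).card) * (-1 : ℤ) ^ ((Z ∩ T).card))
        = if S = T then (2 : ℤ) ^ n else 0 := by
      have congr1 : ∀ Z ∈ Ω.powerset,
          (-1 : ℤ) ^ ((Z ∩ S).card) * (-1 : ℤ) ^ ((Z ∩ T).card)
            = (-1 : ℤ) ^ ((Z ∩ (S ∆ T)).card) := by
        intro Z _
        rw [Finset.inter_comm Z (S ∆ T), symmdiff_sign S T Z,
          Finset.inter_comm S Z, Finset.inter_comm T Z]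
      rw [Finset.sum_congr rfl congr1, orth Ω (S ∆ T) hsub]
      congr 1
      simp [symmDiff_eq_bot, ← Finset.bot_eq_empty]
    rw [← Finset.mul_sum, inner]
  -- Step 4: collapse the T-sum
  have collapse : ∑ S ∈ Ω.powerset, ∑ T ∈ Ω.powerset,
        (c S * (-1 : ℤ) ^ ((X ∩ S).card) * (c T * (-1 : ℤ) ^ ((Y ∩ T).card)))
          * (if S = T then (2 : ℤ) ^ n else 0)
      = (2 : ℤ) ^ n * ∑ S ∈ Ω.powerset,
          (c S) ^ 2 * (-1 : ℤ) ^ (((X ∆ Y) ∩ S).card) := by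
    rw [Finset.mul_sum]
    refine Finset.sum_congr rfl fun S hS => ?_
    have : ∀ T ∈ Ω.powerset,
        (c S * (-1 : ℤ) ^ ((X ∩ S).card) * (c T * (-1 : ℤ) ^ ((Y ∩ T).card)))
          * (if S = T then (2 : ℤ) ^ n else 0)
        = if T = S then
            (c S * (-1 : ℤ) ^ ((X ∩ S).card) * (c T * (-1 : ℤ) ^ ((Y ∩ T).card))) * 2 ^ n
          else 0 := by
      intro T _
      rcases eq_or_ne T S with rfl | h
      · simp
      · simp [h, Ne.symm h]
    rw [Finset.sum_congr rfl this, Finset.sum_ite_eq' Ω.powerset S, if_pos hS,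
      symmdiff_sign X Y S]
    ring
  -- Step 5: fiberwise over cardinalities
  have fiber : ∑ S ∈ Ω.powerset, (c S) ^ 2 * (-1 : ℤ) ^ (((X ∆ Y) ∩ S).card)
      = ∑ k ∈ range (n + 1),
          (∑ i ∈ range (t + 1), kraw n i k) ^ 2 * kraw n k ((X ∆ Y).card) := by
    have hW : X ∆ Y ⊆ Ω := (symmDiff_le_sup (a := X) (b := Y)).trans (union_subset hX hY)
    have hmap : ∀ S ∈ Ω.powerset, S.card ∈ range (n + 1) := by
      intro S hS
      rw [mem_powerset] at hS
      rw [mem_range, Nat.lt_succ_iff, hn]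
      exact card_le_card hS
    rw [← Finset.sum_fiberwise_of_maps_to hmap]
    refine Finset.sum_congr rfl fun k hk => ?_
    have hset : Ω.powerset.filter (fun S => S.card = k) = Ω.powersetCard k := by
      ext S
      simp [mem_powersetCard, mem_powerset]
    rw [hset]
    have congr2 : ∀ S ∈ Ω.powersetCard k,
        (c S) ^ 2 * (-1 : ℤ) ^ (((X ∆ Y) ∩ S).card)
          = (∑ i ∈ range (t + 1), kraw n i k) ^ 2 * (-1 : ℤ) ^ ((S ∩ (X ∆ Y)).card) := by
      intro S hSk
      rw [mem_powersetCard] at hSk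
      rw [hc]
      simp only [hSk.2]
      rw [Finset.inter_comm]
    rw [Finset.sum_congr rfl congr2, ← Finset.mul_sum, sphere_sum Ω (X ∆ Y) hW k]
  have final := doubled.trans (swap.trans (collapse.trans (by rw [fiber])))
  have h2 : (2 : ℤ) ^ n ≠ 0 := pow_ne_zero _ two_ne_zero
  exact mul_left_cancel₀ h2 final

end aux

lemma kraw_zero (n i : ℕ) : kraw n i 0 = (n.choose i : ℤ) := by
  unfold kraw
  rw [Finset.sum_eq_single 0]
  · simp
  · intro j _ hj
    rw [Nat.choose_eq_zero_of_lt (by omega : 0 < j)]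
    simp
  · intro h
    exact absurd (Finset.mem_range.2 (by omega)) h

lemma kraw_big_s11 {m i s : ℕ} (him : m < i) (hs : s ≤ m) : kraw m i s = 0 := by
  unfold kraw
  apply Finset.sum_eq_zero
  intro j hj
  rw [Finset.mem_range] at hj
  rcases Nat.lt_or_ge s j with h | h
  · rw [Nat.choose_eq_zero_of_lt h]; ring
  · rw [Nat.choose_eq_zero_of_lt (show m - s < i - j by omega)]; ring

lemma Asum_eq (n t k : ℕ) (hk : 1 ≤ k) (hkn : k ≤ n) :
    ∑ i ∈ range (t + 1), kraw n i k = kraw (n - 1) t (k - 1) := by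
  have h := coeff_eq (Finset.range n) (Finset.range k)
    (Finset.range_subset_range.2 hkn) (a := 0) (Finset.mem_range.2 hk) t
  simpa using h

/-- Krawtchouk expansion of the intersection of two Hamming balls: for `x,y ∈ {0,1}^n` with
`d(x,y) = w` and `t ∈ {0,…,n}`,
`|B(x,t) ∩ B(y,t)| = 2^{−n}·Σ_{k=0}^n c_k(t)²·K_k^{(n)}(w)`. -/
theorem ball_intersection_krawtchouk (n : ℕ) (x y : Fin n → Bool) (w t : ℕ)
    (hw : hammingDist x y = w) (ht : t ≤ n) :
    ((Finset.univ.filter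
        (fun z : Fin n → Bool => hammingDist x z ≤ t ∧ hammingDist y z ≤ t)).card : ℝ)
      = ((2 : ℝ) ^ n)⁻¹ * ∑ k ∈ Finset.range (n + 1), (ckt n t k) ^ 2 * (kraw n k w : ℝ) := by
  classical
  set e : (Fin n → Bool) → Finset (Fin n) := fun z => univ.filter (fun i => z i = true)
    with he
  have hd : ∀ u v : Fin n → Bool, hammingDist u v = (e u ∆ e v).card := by
    intro u v
    rw [hammingDist]
    congr 1
    ext i
    simp only [he, Finset.mem_symmDiff, Finset.mem_filter, Finset.mem_univ, true_and,
      Finset.mem_filter]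
    cases hu : u i <;> cases hv : v i <;> simp
  have hint := main_int (Finset.univ : Finset (Fin n)) (e x) (e y)
    (Finset.subset_univ _) (Finset.subset_univ _) t
  rw [Finset.card_univ, Fintype.card_fin] at hint
  have hwcard : (e x ∆ e y).card = w := by rw [← hd, hw]
  rw [hwcard] at hint
  -- reindex the Z-sum
  have hreindex : ∑ Z ∈ (Finset.univ : Finset (Fin n)).powerset,
      (if (e x ∆ Z).card ≤ t ∧ (e y ∆ Z).card ≤ t then (1 : ℤ) else 0)
      = ∑ z ∈ (Finset.univ : Finset (Fin n → Bool)),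
          (if hammingDist x z ≤ t ∧ hammingDist y z ≤ t then (1 : ℤ) else 0) := by
    apply Finset.sum_nbij' (i := fun Z => (fun i => decide (i ∈ Z)))
      (j := e)
    · intro Z _; exact Finset.mem_univ _
    · intro z _; exact Finset.mem_powerset.2 (Finset.subset_univ _)
    · intro Z _
      ext i
      simp [he]
    · intro z _
      funext i
      simp [he]
    · intro Z _
      have hez : e (fun i => decide (i ∈ Z)) = Z := by ext i; simp [he]
      rw [hd x _, hd y _, hez]
  rw [hreindex] at hint
  have hcardsum : ((Finset.univ.filter
      (fun z : Fin n → Bool => hammingDist x z ≤ t ∧ hammingDist y z ≤ t)).card : ℤ)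
      = ∑ z ∈ (Finset.univ : Finset (Fin n → Bool)),
          (if hammingDist x z ≤ t ∧ hammingDist y z ≤ t then (1 : ℤ) else 0) := by
    rw [Finset.card_filter]
    push_cast
    rfl
  rw [← hcardsum] at hint
  -- now pass to ℝ
  have hintR : (2 : ℝ) ^ n * ((Finset.univ.filter
      (fun z : Fin n → Bool => hammingDist x z ≤ t ∧ hammingDist y z ≤ t)).card : ℝ)
      = ∑ k ∈ Finset.range (n + 1),
          ((∑ i ∈ range (t + 1), kraw n i k : ℤ) : ℝ) ^ 2 * (kraw n k w : ℝ) := by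
    exact_mod_cast congrArg (fun z : ℤ => (z : ℝ)) hint
  have hck : ∀ k ∈ Finset.range (n + 1),
      (ckt n t k) ^ 2 * (kraw n k w : ℝ)
        = ((∑ i ∈ range (t + 1), kraw n i k : ℤ) : ℝ) ^ 2 * (kraw n k w : ℝ) := by
    intro k hk
    rw [Finset.mem_range, Nat.lt_succ_iff] at hk
    congr 2
    rcases Nat.eq_zero_or_pos k with rfl | hk1
    · rw [ckt]
      simp only [if_pos rfl]
      rw [Finset.sum_congr rfl (fun i _ => kraw_zero n i)]
      push_cast
      rfl
    · rw [ckt, if_neg (by omega), Asum_eq n t k hk1 hk]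
      rcases Nat.lt_or_ge t n with hlt | hge
      · rw [if_pos hlt]
      · have htn : t = n := le_antisymm ht hge
        rw [if_neg (by omega)]
        have : kraw (n - 1) t (k - 1) = 0 := by
          apply kraw_big_s11 <;> omega
        rw [this]
        norm_num
  rw [Finset.sum_congr rfl hck]
  rw [← hintR]
  have h2 : (2 : ℝ) ^ n ≠ 0 := by positivity
  field_simp
end
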